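/- Let T be a tree with a single centroid, and let edge e_a separate edge e_b from the centroid (i.e., after removing e_a, edge e_b and the centroid lie in different components). Then θ_T(e_a) > θ_T(e_b) in the ordering where (n−i, i) > (n−j, j) iff i > j (with i, j ≤ n/2 the smaller parts). -/

import Mathlib

open SimpleGraph

/-- The multiset of sizes of the connected components of `G`. -/
noncomputable def componentSizes {V : Type*} [Finite V] (G : SimpleGraph V) : Multiset ℕ :=
  haveI : Fintype G.ConnectedComponent := Fintype.ofFinite _
  (Finset.univ : Finset G.ConnectedComponent).val.map fun c => c.supp.ncard

/-- `theta T S` is the partition (as a multiset) of `|V|` whose parts are the sizes of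
the connected components of `T` with the edges of `S` removed. -/
noncomputable def theta {V : Type*} [Finite V] (T : SimpleGraph V) (S : Set (Sym2 V)) :
    Multiset ℕ := componentSizes (T.deleteEdges S)

/-- The weight of a vertex `v` of a tree `T`: the maximal number of edges of a subtree
of `T` containing `v` as a leaf; equivalently, the maximal number of vertices of a
connected component of `T - v`. -/
noncomputable def weight {V : Type*} [Finite V] (T : SimpleGraph V) (v : V) : ℕ :=
  sSup (Set.range fun c : ((⊤ : T.Subgraph).deleteVerts {v}).coe.ConnectedComponent =>
    c.supp.ncard)

/-- The centroid of `T`: the set of vertices of minimal weight. -/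
def centroid {V : Type*} [Finite V] (T : SimpleGraph V) : Set V :=
  {v | ∀ u, weight T v ≤ weight T u}

section Aux

set_option linter.unusedSectionVars false

variable {V : Type*} [Fintype V] {T : SimpleGraph V}

lemma reach_endpoint (hT : T.Connected) {x y : V} (hxy : T.Adj x y) (v : V) :
    (T.deleteEdges {s(x,y)}).Reachable v x ∨ (T.deleteEdges {s(x,y)}).Reachable v y := by
  obtain ⟨p⟩ := hT.preconnected v x
  have key : ∀ {a b : V} (_ : T.Walk a b),
      ((T.deleteEdges {s(x,y)}).Reachable b x ∨ (T.deleteEdges {s(x,y)}).Reachable b y) →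
      ((T.deleteEdges {s(x,y)}).Reachable a x ∨ (T.deleteEdges {s(x,y)}).Reachable a y) := by
    intro a b p
    induction p with
    | nil => exact id
    | @cons u w _ h q ih =>
      intro hb
      by_cases he : s(u, w) = s(x, y)
      · rw [Sym2.eq_iff] at he
        rcases he with ⟨hu, _⟩ | ⟨hu, _⟩
        · exact Or.inl (hu ▸ Reachable.refl u)
        · exact Or.inr (hu ▸ Reachable.refl u)
      · have hadj : (T.deleteEdges {s(x,y)}).Adj u w := by
          simp only [deleteEdges_adj, Set.mem_singleton_iff]
          exact ⟨h, he⟩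
        rcases ih hb with h1 | h1
        · exact Or.inl (hadj.reachable.trans h1)
        · exact Or.inr (hadj.reachable.trans h1)
  exact key p (Or.inl (Reachable.refl x))

lemma not_reach_endpoints (hT : T.IsTree) {x y : V} (hxy : T.Adj x y) :
    ¬ (T.deleteEdges {s(x,y)}).Reachable x y := by
  have hb := isAcyclic_iff_forall_adj_isBridge.mp hT.IsAcyclic hxy
  rw [isBridge_iff] at hb
  exact hb

lemma supp_union (hT : T.Connected) {x y : V} (hxy : T.Adj x y) :
    ((T.deleteEdges {s(x,y)}).connectedComponentMk x).supp ∪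
    ((T.deleteEdges {s(x,y)}).connectedComponentMk y).supp = Set.univ := by
  ext v
  simp only [Set.mem_union, ConnectedComponent.mem_supp_iff, Set.mem_univ, iff_true]
  rcases reach_endpoint hT hxy v with h | h
  · exact Or.inl (ConnectedComponent.sound h)
  · exact Or.inr (ConnectedComponent.sound h)

lemma comp_ne (hT : T.IsTree) {x y : V} (hxy : T.Adj x y) :
    (T.deleteEdges {s(x,y)}).connectedComponentMk x ≠
    (T.deleteEdges {s(x,y)}).connectedComponentMk y :=
  fun h => not_reach_endpoints hT hxy (ConnectedComponent.exact h)

lemma supp_sum (hT : T.IsTree) {x y : V} (hxy : T.Adj x y) :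
    ((T.deleteEdges {s(x,y)}).connectedComponentMk x).supp.ncard +
    ((T.deleteEdges {s(x,y)}).connectedComponentMk y).supp.ncard = Fintype.card V := by
  rw [← Set.ncard_union_eq (pairwise_disjoint_supp_connectedComponent _ (comp_ne hT hxy))
      (Set.toFinite _) (Set.toFinite _), supp_union hT.isConnected hxy, Set.ncard_univ,
      Nat.card_eq_fintype_card]

lemma theta_single (hT : T.IsTree) {x y : V} (hxy : T.Adj x y) :
    theta T {s(x,y)} =
      {((T.deleteEdges {s(x,y)}).connectedComponentMk x).supp.ncard,
       ((T.deleteEdges {s(x,y)}).connectedComponentMk y).supp.ncard} := by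
  classical
  unfold theta componentSizes
  set G := T.deleteEdges {s(x,y)} with hG
  have hu : ∀ (I : Fintype G.ConnectedComponent), (@Finset.univ _ I) =
      ({G.connectedComponentMk x, G.connectedComponentMk y} : Finset _) := by
    intro I
    ext C
    simp only [Finset.mem_univ, true_iff, Finset.mem_insert, Finset.mem_singleton]
    obtain ⟨v, rfl⟩ := C.exists_rep
    rcases reach_endpoint hT.isConnected hxy v with h | h
    · exact Or.inl (ConnectedComponent.sound h)
    · exact Or.inr (ConnectedComponent.sound h)
  rw [hu]
  have hne := comp_ne hT hxy
  rw [Finset.insert_val, Finset.singleton_val, Multiset.ndinsert_of_notMem (by rw [Multiset.mem_singleton]; exact hne)]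
  simp [Multiset.insert_eq_cons]

end Aux

section Weight

set_option linter.unusedSectionVars false

variable {V : Type*} [Fintype V] {T : SimpleGraph V}

lemma reach_dv (s : Set V) {G : SimpleGraph V} (hG : G ≤ T) :
    ∀ {u v : V} (p : G.Walk u v), (∀ w ∈ p.support, w ∉ s) →
    ∀ (hu : u ∈ ((⊤ : T.Subgraph).deleteVerts s).verts)
      (hv : v ∈ ((⊤ : T.Subgraph).deleteVerts s).verts),
    ((⊤ : T.Subgraph).deleteVerts s).coe.Reachable ⟨u, hu⟩ ⟨v, hv⟩ := by
  intro u v p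
  induction p with
  | nil => intro _ hu hv; exact Reachable.refl _
  | @cons a b _ h q ih =>
    intro hp hu hv
    have hb : b ∈ ((⊤ : T.Subgraph).deleteVerts s).verts := by
      rw [Subgraph.deleteVerts_verts, Subgraph.verts_top]
      exact ⟨Set.mem_univ b, hp b (by simp [Walk.support_cons])⟩
    refine Reachable.trans (Adj.reachable ?_)
      (ih (fun w hw => hp w (by simp [Walk.support_cons, hw])) hb hv)
    simp only [Subgraph.coe_adj, Subgraph.deleteVerts_adj, Subgraph.verts_top, Subgraph.top_adj]
    refine ⟨Set.mem_univ a, hp a (by simp [Walk.support_cons]), Set.mem_univ b,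
      (Set.mem_diff _).mp hb |>.2, hG h⟩

lemma reach_of_dv {s : Set V} {G' : SimpleGraph V}
    (h : ∀ a b : V, T.Adj a b → a ∉ s → b ∉ s → G'.Adj a b)
    {u v : ((⊤ : T.Subgraph).deleteVerts s).verts}
    (hr : (((⊤ : T.Subgraph).deleteVerts s).coe).Reachable u v) :
    G'.Reachable u.val v.val := by
  let f : ((⊤ : T.Subgraph).deleteVerts s).coe →g G' :=
    { toFun := Subtype.val,
      map_rel' := by
        rintro ⟨a, ha⟩ ⟨b, hb⟩ hab
        simp only [Subgraph.coe_adj, Subgraph.deleteVerts_adj, Subgraph.verts_top,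
          Subgraph.top_adj] at hab
        exact h a b hab.2.2.2.2 hab.2.1 hab.2.2.2.1 }
  exact hr.map f

lemma le_weight (v : V) (C : ((⊤ : T.Subgraph).deleteVerts {v}).coe.ConnectedComponent) :
    C.supp.ncard ≤ weight T v :=
  le_csSup (Set.Finite.bddAbove (Set.finite_range _)) ⟨C, rfl⟩

lemma weight_le {v : V} (hne : Nonempty ((⊤ : T.Subgraph).deleteVerts {v}).verts) {m : ℕ}
    (h : ∀ C : ((⊤ : T.Subgraph).deleteVerts {v}).coe.ConnectedComponent, C.supp.ncard ≤ m) :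
    weight T v ≤ m := by
  have : Nonempty (((⊤ : T.Subgraph).deleteVerts {v}).coe.ConnectedComponent) :=
    ⟨SimpleGraph.connectedComponentMk _ hne.some⟩
  exact csSup_le (Set.range_nonempty _) (by rintro _ ⟨C, rfl⟩; exact h C)

end Weight

section Core

set_option linter.unusedSectionVars false

variable {V : Type*} [Fintype V] {T : SimpleGraph V}

lemma comp_lt (hT : T.IsTree) {c : V} (hc : centroid T = {c}) {x y : V} (hxy : T.Adj x y)
    (hxc : ¬ (T.deleteEdges {s(x,y)}).Reachable x c) :
    ((T.deleteEdges {s(x,y)}).connectedComponentMk x).supp.ncard <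
    ((T.deleteEdges {s(x,y)}).connectedComponentMk y).supp.ncard := by
  classical
  set G := T.deleteEdges {s(x,y)} with hGdef
  have hGle : G ≤ T := deleteEdges_le _
  set A := (G.connectedComponentMk x).supp with hA
  set A' := (G.connectedComponentMk y).supp with hA'
  have hcy : G.Reachable c y :=
    (reach_endpoint hT.isConnected hxy c).resolve_left (fun h => hxc h.symm)
  have hxA : x ∈ A := ConnectedComponent.connectedComponentMk_mem
  have hxc' : x ≠ c := fun h => hxc (h ▸ Reachable.refl x)
  -- |A| ≤ weight T c
  have h1 : A.ncard ≤ weight T c := by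
    have hxv : x ∈ ((⊤ : T.Subgraph).deleteVerts {c}).verts := by
      rw [Subgraph.deleteVerts_verts, Subgraph.verts_top]
      exact ⟨Set.mem_univ x, by simp [hxc']⟩
    set D := (((⊤ : T.Subgraph).deleteVerts {c}).coe.connectedComponentMk ⟨x, hxv⟩) with hD
    have hsub : A ⊆ Subtype.val '' D.supp := by
      intro v hv
      have hrv : G.Reachable v x := ConnectedComponent.exact hv
      obtain ⟨p⟩ := hrv
      have hps : ∀ w ∈ p.support, w ∉ ({c} : Set V) := by
        intro w hw hwc
        rw [Set.mem_singleton_iff] at hwc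
        subst hwc
        exact hxc (Reachable.symm ⟨p.dropUntil w hw⟩)
      have hvv : v ∈ ((⊤ : T.Subgraph).deleteVerts {c}).verts := by
        rw [Subgraph.deleteVerts_verts, Subgraph.verts_top]
        exact ⟨Set.mem_univ v, hps v p.start_mem_support⟩
      exact ⟨⟨v, hvv⟩, ConnectedComponent.sound (reach_dv {c} hGle p hps hvv hxv), rfl⟩
    calc A.ncard ≤ (Subtype.val '' D.supp).ncard := Set.ncard_le_ncard hsub (Set.toFinite _)
      _ = D.supp.ncard := Set.ncard_image_of_injective _ Subtype.val_injective
      _ ≤ weight T c := le_weight c D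
  -- weight T x ≤ max (|A| - 1) |A'|
  have h2 : weight T x ≤ max (A.ncard - 1) A'.ncard := by
    have hyv : y ∈ ((⊤ : T.Subgraph).deleteVerts {x}).verts := by
      rw [Subgraph.deleteVerts_verts, Subgraph.verts_top]
      exact ⟨Set.mem_univ y, by simp [hxy.ne']⟩
    have hproj : ∀ a b : V, T.Adj a b → a ∉ ({x} : Set V) → b ∉ ({x} : Set V) → G.Adj a b := by
      intro a b hab ha hb
      simp only [Set.mem_singleton_iff] at ha hb
      simp only [hGdef, deleteEdges_adj, Set.mem_singleton_iff]
      refine ⟨hab, fun he => ?_⟩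
      rw [Sym2.eq_iff] at he
      rcases he with ⟨h', _⟩ | ⟨_, h'⟩ <;> [exact ha h'; exact hb h']
    refine weight_le ⟨⟨y, hyv⟩⟩ ?_
    intro D
    obtain ⟨⟨v, hvv⟩, hvD⟩ := D.exists_rep
    have hvx : v ≠ x := by
      rw [Subgraph.deleteVerts_verts, Subgraph.verts_top] at hvv
      simpa using hvv.2
    by_cases hvA : v ∈ A
    · have hsub : Subtype.val '' D.supp ⊆ A \ {x} := by
        rintro _ ⟨⟨u, huv⟩, huD, rfl⟩
        have hux : u ≠ x := by
          rw [Subgraph.deleteVerts_verts, Subgraph.verts_top] at huv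
          simpa using huv.2
        have hr : G.Reachable u v := by
          have h0 : (((⊤ : T.Subgraph).deleteVerts {x}).coe).Reachable ⟨u, huv⟩ ⟨v, hvv⟩ :=
            ConnectedComponent.exact (huD.trans hvD.symm)
          exact reach_of_dv hproj h0
        refine ⟨?_, by simpa using hux⟩
        rw [hA, ConnectedComponent.mem_supp_iff]
        rw [ConnectedComponent.mem_supp_iff] at hvA
        rw [← hvA]
        exact ConnectedComponent.sound hr
      calc D.supp.ncard = (Subtype.val '' D.supp).ncard :=
            (Set.ncard_image_of_injective _ Subtype.val_injective).symm
        _ ≤ (A \ {x}).ncard := Set.ncard_le_ncard hsub (Set.toFinite _)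
        _ = A.ncard - 1 := by rw [Set.ncard_diff_singleton_of_mem hxA]
        _ ≤ _ := le_max_left _ _
    · have hvA' : v ∈ A' := by
        rcases reach_endpoint hT.isConnected hxy v with h | h
        · exact absurd (ConnectedComponent.sound h) hvA
        · exact ConnectedComponent.sound h
      have hsub : Subtype.val '' D.supp ⊆ A' := by
        rintro _ ⟨⟨u, huv⟩, huD, rfl⟩
        have hr : G.Reachable u v := by
          have h0 : (((⊤ : T.Subgraph).deleteVerts {x}).coe).Reachable ⟨u, huv⟩ ⟨v, hvv⟩ :=
            ConnectedComponent.exact (huD.trans hvD.symm)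
          exact reach_of_dv hproj h0
        rw [hA', ConnectedComponent.mem_supp_iff]
        rw [ConnectedComponent.mem_supp_iff] at hvA'
        rw [← hvA']
        exact ConnectedComponent.sound hr
      calc D.supp.ncard = (Subtype.val '' D.supp).ncard :=
            (Set.ncard_image_of_injective _ Subtype.val_injective).symm
        _ ≤ A'.ncard := Set.ncard_le_ncard hsub (Set.toFinite _)
        _ ≤ _ := le_max_right _ _
  have hcc : ∀ u, weight T c ≤ weight T u := by
    have : c ∈ centroid T := by rw [hc]; rfl
    exact this
  have hA1 : 1 ≤ A.ncard := by
    have : A.Nonempty := ⟨x, hxA⟩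
    have := Set.ncard_pos (Set.toFinite A) |>.mpr this
    omega
  by_contra hle
  push_neg at hle
  rcases lt_or_eq_of_le hle with hlt | heq
  · have hwx : weight T x ≤ A.ncard - 1 := h2.trans (max_le le_rfl (by omega))
    have := (hcc x).trans hwx
    omega
  · have hwxc : weight T x ≤ weight T c :=
      (h2.trans (max_le (by omega) (by omega))).trans h1
    have hxcent : x ∈ centroid T := fun u => hwxc.trans (hcc u)
    rw [hc] at hxcent
    exact hxc' hxcent

end Core

section Main

set_option linter.unusedSectionVars false

variable {V : Type*} [Fintype V] {T : SimpleGraph V}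

lemma key_eq (hT : T.IsTree) {c : V} (hc : centroid T = {c}) {x y : V} (hxy : T.Adj x y)
    (hxc : ¬ (T.deleteEdges {s(x,y)}).Reachable x c) {n i : ℕ} (hn : n = Fintype.card V)
    (hi : i ≤ n - i) (ha : theta T {s(x,y)} = {n - i, i}) :
    i = ((T.deleteEdges {s(x,y)}).connectedComponentMk x).supp.ncard := by
  set a := ((T.deleteEdges {s(x,y)}).connectedComponentMk x).supp.ncard with ha'
  set a' := ((T.deleteEdges {s(x,y)}).connectedComponentMk y).supp.ncard with ha''
  have hsum : a + a' = n := by rw [hn]; exact supp_sum hT hxy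
  have hlt : a < a' := comp_lt hT hc hxy hxc
  have ht : ({a, a'} : Multiset ℕ) = {n - i, i} := (theta_single hT hxy).symm.trans ha
  have hmem : a = n - i ∨ a = i := by
    have hm : a ∈ ({n - i, i} : Multiset ℕ) := by rw [← ht]; simp
    simpa using hm
  have hs2 : a + a' = (n - i) + i := by
    have := congrArg Multiset.sum ht
    simpa using this
  omega

lemma reach_transfer {e f : Sym2 V} {c : V}
    (hf : ∀ v ∈ f, ¬ (T.deleteEdges {e}).Reachable v c)
    {u : V} (h : (T.deleteEdges {e}).Reachable u c) : (T.deleteEdges {f}).Reachable u c := by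
  obtain ⟨p⟩ := h
  have key : ∀ {a b : V} (_ : (T.deleteEdges {e}).Walk a b),
      (T.deleteEdges {e}).Reachable b c → (T.deleteEdges {f}).Reachable b c →
      (T.deleteEdges {f}).Reachable a c := by
    intro a b p
    induction p with
    | nil => exact fun _ h => h
    | @cons a w _ hadj q ih =>
      intro h1 h2
      have hTab : T.Adj a w := (deleteEdges_adj.mp hadj).1
      have hne : s(a, w) ≠ f := by
        intro h'
        exact hf w (h' ▸ Sym2.mem_mk_right a w) (Reachable.trans ⟨q⟩ h1)
      have hfa : (T.deleteEdges {f}).Adj a w := by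
        simp only [deleteEdges_adj, Set.mem_singleton_iff]
        exact ⟨hTab, hne⟩
      exact hfa.reachable.trans (ih h1 h2)
  exact key p (Reachable.refl c) (Reachable.refl c)

lemma orient (hT : T.IsTree) {x0 y0 : V} (hxy : T.Adj x0 y0) (c : V) :
    ∃ x y, T.Adj x y ∧ s(x0, y0) = s(x, y) ∧
      ¬ (T.deleteEdges {s(x,y)}).Reachable x c ∧ (T.deleteEdges {s(x,y)}).Reachable c y := by
  by_cases h : (T.deleteEdges {s(x0,y0)}).Reachable c x0
  · refine ⟨y0, x0, hxy.symm, Sym2.eq_swap.symm, ?_, ?_⟩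
    · have hset : ({s(y0,x0)} : Set (Sym2 V)) = {s(x0,y0)} := by rw [Sym2.eq_swap]
      rw [hset]
      intro h'
      exact not_reach_endpoints hT hxy ((h'.trans h).symm)
    · have hset : ({s(y0,x0)} : Set (Sym2 V)) = {s(x0,y0)} := by rw [Sym2.eq_swap]
      rw [hset]
      exact h
  · exact ⟨x0, y0, hxy, rfl, fun h' => h h'.symm,
      (reach_endpoint hT.isConnected hxy c).resolve_left h⟩

end Main

/-- If `T` is a tree with a single centroid `c` and the edge `e_a` separates the edge
`e_b` from `c`, then `θ_T(e_a) > θ_T(e_b)`, i.e. the smaller part of `θ_T(e_a)`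
exceeds the smaller part of `θ_T(e_b)`. -/
theorem theta_gt_of_separates {V : Type*} [Fintype V] (T : SimpleGraph V)
    (hT : T.IsTree) (n : ℕ) (hn : n = Fintype.card V)
    (c : V) (hc : centroid T = {c})
    (ea eb : Sym2 V) (hea : ea ∈ T.edgeSet) (heb : eb ∈ T.edgeSet) (hne : ea ≠ eb)
    (hsep : ∀ v ∈ eb, ¬ (T.deleteEdges {ea}).Reachable v c)
    (i j : ℕ) (hi : i ≤ n - i) (hj : j ≤ n - j)
    (ha : theta T {ea} = {n - i, i}) (hb : theta T {eb} = {n - j, j}) :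
    j < i := by
  classical
  revert hea hne hsep ha
  refine Sym2.inductionOn ea ?_
  intro x0 y0 hea hne hsep ha
  revert heb hne hsep hb
  refine Sym2.inductionOn eb ?_
  intro x1 y1 heb hb hne hsep
  rw [mem_edgeSet] at hea heb
  obtain ⟨x, y, hxy, hEa, hxc, hcy⟩ := orient hT hea c
  obtain ⟨x', y', hxy', hEb, hxc', hcy'⟩ := orient hT heb c
  rw [hEa] at ha hsep hne
  rw [hEb] at hb hsep hne
  -- identify i and j
  have hi' := key_eq hT hc hxy hxc hn hi ha
  have hj' := key_eq hT hc hxy' hxc' hn hj hb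
  set Ga := T.deleteEdges {s(x, y)} with hGa
  set Gb := T.deleteEdges {s(x', y')} with hGb
  set A := (Ga.connectedComponentMk x).supp with hA
  set B := (Gb.connectedComponentMk x').supp with hB
  -- x is reachable to c in Gb
  have hxcb : Gb.Reachable x c := by
    have hadj : Gb.Adj x y := by
      simp only [hGb, deleteEdges_adj, Set.mem_singleton_iff]
      exact ⟨hxy, hne⟩
    exact hadj.reachable.trans (reach_transfer hsep hcy.symm)
  have hsub : B ⊆ A \ {x} := by
    intro u hu
    have hu' : Gb.Reachable u x' := ConnectedComponent.exact hu
    have hunr : ¬ Gb.Reachable u c := by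
      intro h
      exact hxc' ((hu'.symm).trans h)
    constructor
    · by_contra huA
      have huy : Ga.Reachable u y := by
        rcases reach_endpoint hT.isConnected hxy u with h | h
        · exact absurd (show u ∈ A from ConnectedComponent.sound h) huA
        · exact h
      exact hunr (reach_transfer hsep (huy.trans hcy.symm))
    · intro hux
      rw [Set.mem_singleton_iff] at hux
      subst hux
      exact hunr hxcb
  have hxA : x ∈ A := ConnectedComponent.connectedComponentMk_mem
  have hcard : B.ncard ≤ A.ncard - 1 := by
    calc B.ncard ≤ (A \ {x}).ncard := Set.ncard_le_ncard hsub (Set.toFinite _)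
      _ = A.ncard - 1 := Set.ncard_diff_singleton_of_mem hxA
  have hA1 : 1 ≤ A.ncard := by
    have := Set.ncard_pos (Set.toFinite A) |>.mpr ⟨x, hxA⟩
    omega
  omega
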